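/- Let S : ℝ → ℝ be measurable, nonnegative and Lebesgue-integrable, let θ > 0, let F_θ := {f ∈ ℝ : S(f) > θ}, and assume the level set {f ∈ ℝ : S(f) = θ} has Lebesgue measure zero. If F ⊆ ℝ is measurable with μ(F) ≤ μ(F_θ) and ∫_F S(f) df = ∫_{F_θ} S(f) df, then μ(F \ F_θ) = 0 and μ(F_θ \ F) = 0; i.e., any energy-maximizing set of measure at most μ(F_θ) coincides with F_θ up to a Lebesgue-null set. -/

import Mathlib

open MeasureTheory

/-- If the level set `{S = θ}` is null, then any energy-maximizing set of
measure at most `μ F_θ` coincides with `F_θ = {S > θ}` up to a Lebesgue-null set. -/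
theorem waterfilling_set_unique_maximizer
    (S : ℝ → ℝ) (hSmeas : Measurable S) (hSnonneg : ∀ f, 0 ≤ S f)
    (hSint : Integrable S) (θ : ℝ) (hθ : 0 < θ)
    (hlevel : volume {f : ℝ | S f = θ} = 0)
    (F : Set ℝ) (hFmeas : MeasurableSet F)
    (hle : volume F ≤ volume {f : ℝ | θ < S f})
    (heq : ∫ f in F, S f = ∫ f in {f : ℝ | θ < S f}, S f) :
    volume (F \ {f : ℝ | θ < S f}) = 0 ∧ volume ({f : ℝ | θ < S f} \ F) = 0 := by
  set T : Set ℝ := {f : ℝ | θ < S f} with hT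
  have hTmeas : MeasurableSet T := measurableSet_lt measurable_const hSmeas
  have hTfin : volume T < ⊤ := hSint.measure_gt_lt_top hθ
  have hFfin : volume F < ⊤ := lt_of_le_of_lt hle hTfin
  have hAfin : volume (F \ T) < ⊤ :=
    lt_of_le_of_lt (measure_mono (Set.diff_subset)) hFfin
  have hBfin : volume (T \ F) < ⊤ :=
    lt_of_le_of_lt (measure_mono (Set.diff_subset)) hTfin
  have hIfin : volume (F ∩ T) < ⊤ :=
    lt_of_le_of_lt (measure_mono (Set.inter_subset_left)) hFfin
  -- split integrals
  have hsplitF : (∫ f in F ∩ T, S f) + ∫ f in F \ T, S f = ∫ f in F, S f :=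
    integral_inter_add_diff hTmeas (hSint.integrableOn : IntegrableOn S F _)
  have hsplitT : (∫ f in T ∩ F, S f) + ∫ f in T \ F, S f = ∫ f in T, S f :=
    integral_inter_add_diff hFmeas (hSint.integrableOn : IntegrableOn S T _)
  rw [Set.inter_comm] at hsplitT
  have hAB : ∫ f in F \ T, S f = ∫ f in T \ F, S f := by
    have h := heq
    rw [← hsplitF, ← hsplitT] at h
    exact add_left_cancel h
  -- measure comparison
  have hmF : volume (F ∩ T) + volume (F \ T) = volume F := measure_inter_add_diff F hTmeas
  have hmT : volume (T ∩ F) + volume (T \ F) = volume T := measure_inter_add_diff T hFmeas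
  rw [Set.inter_comm] at hmT
  have hμAB : volume (F \ T) ≤ volume (T \ F) := by
    have h : volume (F ∩ T) + volume (F \ T) ≤ volume (F ∩ T) + volume (T \ F) := by
      rw [hmF, hmT]; exact hle
    exact (ENNReal.add_le_add_iff_left hIfin.ne).1 h
  have hμABr : (volume (F \ T)).toReal ≤ (volume (T \ F)).toReal :=
    ENNReal.toReal_mono hBfin.ne hμAB
  -- bounds
  have h1 : ∫ f in F \ T, S f ≤ θ * (volume (F \ T)).toReal := by
    have := setIntegral_mono_on hSint.integrableOn
      (integrableOn_const hAfin.ne) (hFmeas.diff hTmeas)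
      (fun x hx => le_of_not_gt hx.2)
    simpa [setIntegral_const, mul_comm, measureReal_def] using this
  have h2 : θ * (volume (T \ F)).toReal ≤ ∫ f in T \ F, S f := by
    have := setIntegral_mono_on (integrableOn_const hBfin.ne)
      hSint.integrableOn (hTmeas.diff hFmeas)
      (fun x hx => le_of_lt hx.1)
    simpa [setIntegral_const, mul_comm, measureReal_def] using this
  have hθμ : θ * (volume (F \ T)).toReal ≤ θ * (volume (T \ F)).toReal :=
    mul_le_mul_of_nonneg_left hμABr hθ.le
  have hBeq : ∫ f in T \ F, S f = θ * (volume (T \ F)).toReal := by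
    rw [← hAB] at h2 ⊢
    linarith
  -- S - θ has zero integral on T \ F
  have hBmeas : MeasurableSet (T \ F) := hTmeas.diff hFmeas
  have hintsub : IntegrableOn (fun f => S f - θ) (T \ F) volume :=
    hSint.integrableOn.sub (integrableOn_const hBfin.ne)
  have hzero : ∫ f in T \ F, (S f - θ) = 0 := by
    rw [integral_sub hSint.integrableOn (integrableOn_const hBfin.ne),
      setIntegral_const, measureReal_def, smul_eq_mul, mul_comm, hBeq]
    ring
  have hnonneg : 0 ≤ᵐ[volume.restrict (T \ F)] fun f => S f - θ := by
    refine (ae_restrict_iff' hBmeas).2 (Filter.Eventually.of_forall fun x hx => ?_)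
    simp only [Pi.zero_apply, sub_nonneg]
    exact le_of_lt hx.1
  have hae : (fun f => S f - θ) =ᵐ[volume.restrict (T \ F)] 0 :=
    (setIntegral_eq_zero_iff_of_nonneg_ae hnonneg hintsub).1 hzero
  have hBnull : volume (T \ F) = 0 := by
    have : ∀ᵐ x ∂(volume.restrict (T \ F)), x ∉ T \ F := by
      filter_upwards [hae] with x hx
      intro hxB
      have : θ < S x := hxB.1
      simp only [Pi.zero_apply] at hx
      linarith
    have h := (ae_restrict_iff' hBmeas).1 this
    rw [ae_iff] at h
    have hsub : T \ F ⊆ {x | ¬(x ∈ T \ F → x ∉ T \ F)} := fun x hxB hc => hc hxB hxB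
    exact measure_mono_null hsub h
  exact ⟨le_antisymm (hBnull ▸ hμAB) zero_le, hBnull⟩
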